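/- Fix parameters α₀, α₁ ∈ ℝ, α₂ ∈ ℝ^d, σα > 0, β₁, β₂, β₃ ∈ ℝ, β₄ ∈ ℝ^d, a covariate value w ∈ ℝ^d, and exposure levels a, a* ∈ ℝ. With δ(Λ; a, a′) defined as the exact log-hazard expression (log r_{a,a′}(Λ) + (β₁a + β₄ᵀw) + (β₂ + β₃a)(α₀ + α₁a′ + α₂ᵀw) + (1/2)(β₂ + β₃a)²σα², where r_{a,a′}(Λ) is the ratio of Gaussian integrals ∫ exp(−Λ e^{(β₂+β₃a)²σα² + β₁a + β₂m + β₃am + β₄ᵀw}) dN(μ_{a′}, σα²)(m) over ∫ exp(−Λ e^{β₁a + β₂m + β₃am + β₄ᵀw}) dN(μ_{a′}, σα²)(m), μ_{a′} = α₀ + α₁a′ + α₂ᵀw), the natural direct effect expression converges to its rare-outcome approximation: lim_{Λ→0⁺} [δ(Λ; a, a*) − δ(Λ; a*, a*)] = {β₁ + β₃(α₀ + α₁a* + α₂ᵀw + β₂σα²)}(a − a*) + (1/2)β₃²σα²(a² − a*²). -/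

import Mathlib

open MeasureTheory ProbabilityTheory Real Filter

lemma aux_int (μ : ℝ) (v : NNReal) (g : ℝ → ℝ) (hg : Continuous g) :
    Tendsto (fun Λ : ℝ => ∫ m, exp (-(Λ * exp (g m))) ∂(gaussianReal μ v))
      (nhdsWithin 0 (Set.Ioi 0)) (nhds 1) := by
  have h := MeasureTheory.tendsto_integral_filter_of_dominated_convergence
    (μ := gaussianReal μ v) (l := nhdsWithin (0:ℝ) (Set.Ioi 0))
    (F := fun Λ m => exp (-(Λ * exp (g m)))) (f := fun _ => (1:ℝ)) (bound := fun _ => (1:ℝ))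
    (Filter.Eventually.of_forall fun Λ =>
      (Continuous.aestronglyMeasurable (by continuity)))
    ?_ (integrable_const 1) ?_
  · simpa using h
  · filter_upwards [self_mem_nhdsWithin] with Λ hΛ
    filter_upwards with m
    rw [Real.norm_eq_abs, abs_of_pos (exp_pos _)]
    have : (0:ℝ) ≤ Λ * exp (g m) := le_of_lt (mul_pos hΛ (exp_pos _))
    calc exp (-(Λ * exp (g m))) ≤ exp 0 := exp_le_exp.2 (by linarith)
      _ = 1 := exp_zero
  · filter_upwards with m
    have : Continuous (fun Λ : ℝ => exp (-(Λ * exp (g m)))) := by continuity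
    have h0 := this.continuousAt (x := (0:ℝ)) |>.tendsto
    simp only [neg_zero, zero_mul, exp_zero] at h0
    exact h0.mono_left nhdsWithin_le_nhds

lemma aux_r (c₀ c₁ c₂ : ℝ) (μ : ℝ) (v : NNReal) :
    Tendsto (fun Λ : ℝ =>
      (∫ m, exp (-(Λ * exp (c₀ + c₁ * m))) ∂(gaussianReal μ v))
        / (∫ m, exp (-(Λ * exp (c₂ + c₁ * m))) ∂(gaussianReal μ v)))
      (nhdsWithin 0 (Set.Ioi 0)) (nhds 1) := by
  have h1 := aux_int μ v (fun m => c₀ + c₁ * m) (by continuity)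
  have h2 := aux_int μ v (fun m => c₂ + c₁ * m) (by continuity)
  have := h1.div h2 one_ne_zero
  rw [div_one] at this
  exact this

/-- Under the linear normal mediator model and the Cox outcome model
with exposure-mediator interaction, the exact natural direct effect expression
`δ(Λ; a, a*) − δ(Λ; a*, a*)` converges, as the cumulative baseline hazard `Λ → 0⁺`
(rare outcome), to its rare-outcome approximation
`{β₁ + β₃(α₀ + α₁ a* + α₂ᵀw + β₂σα²)}(a − a*) + (1/2)β₃²σα²(a² − a*²)`. -/
theorem stmt_17 (d : ℕ) (α₀ α₁ : ℝ) (α₂ : Fin d → ℝ) (σα : ℝ) (hσα : 0 < σα)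
    (β₁ β₂ β₃ : ℝ) (β₄ : Fin d → ℝ) (w : Fin d → ℝ) (a astar : ℝ)
    (μm : ℝ → ℝ) (hμm : μm = fun a' => α₀ + α₁ * a' + ∑ i, α₂ i * w i)
    (r : ℝ → ℝ → ℝ → ℝ)
    (hr : r = fun a a' Λ =>
      (∫ m, exp (-(Λ * exp ((β₂ + β₃ * a) ^ 2 * σα ^ 2 + β₁ * a + β₂ * m + β₃ * a * m
            + ∑ i, β₄ i * w i))) ∂(gaussianReal (μm a') ⟨σα ^ 2, sq_nonneg σα⟩))
        / (∫ m, exp (-(Λ * exp (β₁ * a + β₂ * m + β₃ * a * m + ∑ i, β₄ i * w i)))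
            ∂(gaussianReal (μm a') ⟨σα ^ 2, sq_nonneg σα⟩)))
    (δ : ℝ → ℝ → ℝ → ℝ)
    (hδ : δ = fun Λ a a' => Real.log (r a a' Λ) + (β₁ * a + ∑ i, β₄ i * w i)
      + (β₂ + β₃ * a) * (α₀ + α₁ * a' + ∑ i, α₂ i * w i)
      + (1 / 2) * (β₂ + β₃ * a) ^ 2 * σα ^ 2) :
    Tendsto (fun Λ => δ Λ a astar - δ Λ astar astar) (nhdsWithin 0 (Set.Ioi 0))
      (nhds ((β₁ + β₃ * (α₀ + α₁ * astar + (∑ i, α₂ i * w i) + β₂ * σα ^ 2))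
          * (a - astar)
        + (1 / 2) * β₃ ^ 2 * σα ^ 2 * (a ^ 2 - astar ^ 2))) := by
  have key2 : ∀ b : ℝ, Tendsto (fun Λ => r b astar Λ) (nhdsWithin 0 (Set.Ioi 0)) (nhds 1) := by
    intro b
    rw [hr]
    have e1 : ∀ m : ℝ, (β₂ + β₃ * b) ^ 2 * σα ^ 2 + β₁ * b + β₂ * m + β₃ * b * m
        + ∑ i, β₄ i * w i
        = ((β₂ + β₃ * b) ^ 2 * σα ^ 2 + β₁ * b + ∑ i, β₄ i * w i) + (β₂ + β₃ * b) * m :=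
      fun m => by ring
    have e2 : ∀ m : ℝ, β₁ * b + β₂ * m + β₃ * b * m + ∑ i, β₄ i * w i
        = (β₁ * b + ∑ i, β₄ i * w i) + (β₂ + β₃ * b) * m := fun m => by ring
    simp only [e1, e2]
    exact aux_r _ _ _ _ _
  have hra := key2 a
  have hrs := key2 astar
  have hlog : Tendsto Real.log (nhds (1:ℝ)) (nhds 0) := by
    simpa using (Real.continuousAt_log one_ne_zero).tendsto
  have hla := hlog.comp hra
  have hls := hlog.comp hrs
  have key := (hla.sub hls).add_const
    ((β₁ * a + ∑ i, β₄ i * w i)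
      + (β₂ + β₃ * a) * (α₀ + α₁ * astar + ∑ i, α₂ i * w i)
      + (1 / 2) * (β₂ + β₃ * a) ^ 2 * σα ^ 2
      - ((β₁ * astar + ∑ i, β₄ i * w i)
      + (β₂ + β₃ * astar) * (α₀ + α₁ * astar + ∑ i, α₂ i * w i)
      + (1 / 2) * (β₂ + β₃ * astar) ^ 2 * σα ^ 2))
  rw [hδ]
  convert key using 2 with Λ
  · simp only [Function.comp]; ring
  · ring
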